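/- Let $\phi$ be an N-function with $\Delta_2(\{\phi, \phi^*\}) < \infty$. Then there exists $\epsilon > 0$, depending only on the $\Delta_2$ constants, such that for all $0 \le k \le 1$, all $\lambda \ge 0$ and all $t \ge 0$: $\phi_\lambda(k t) \le C\, k^{1+\epsilon}\, \phi_\lambda(t)$ for some constant $C$ depending only on the $\Delta_2$ constants. -/

import Mathlib

open MeasureTheory Filter

structure IsNFunctionDeriv (φ' : ℝ → ℝ) : Prop where
  mono : MonotoneOn φ' (Set.Ici 0)
  left_cont : ∀ t > (0 : ℝ), Tendsto φ' (nhdsWithin t (Set.Iio t)) (nhds (φ' t))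
  zero : φ' 0 = 0
  pos : ∀ t > (0 : ℝ), 0 < φ' t
  tendsto_top : Tendsto φ' atTop atTop

noncomputable def phiOf (φ' : ℝ → ℝ) (t : ℝ) : ℝ := ∫ s in (0 : ℝ)..t, φ' s

noncomputable def phiInvDeriv (φ' : ℝ → ℝ) (t : ℝ) : ℝ :=
  sInf {s : ℝ | 0 ≤ s ∧ t < φ' s}

noncomputable def phiConj (φ' : ℝ → ℝ) (t : ℝ) : ℝ :=
  ∫ s in (0 : ℝ)..t, phiInvDeriv φ' s

noncomputable def shiftedDeriv (φ' : ℝ → ℝ) (lam t : ℝ) : ℝ :=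
  φ' (lam + t) / (lam + t) * t

/-- The shifted N-function `φ_λ(t) = ∫₀ᵗ φ'_λ(s) ds`. -/
noncomputable def shiftedPhi (φ' : ℝ → ℝ) (lam t : ℝ) : ℝ :=
  ∫ s in (0 : ℝ)..t, shiftedDeriv φ' lam s



section generic
variable {g : ℝ → ℝ}

lemma gen_intInt (mono : MonotoneOn g (Set.Ici 0)) {a b : ℝ} (ha : 0 ≤ a) (hab : a ≤ b) :
    IntervalIntegrable g volume a b := by
  apply MonotoneOn.intervalIntegrable
  apply mono.mono
  rw [Set.uIcc_of_le hab]
  intro x hx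
  exact le_trans ha hx.1

lemma gen_nonneg (mono : MonotoneOn g (Set.Ici 0)) (g0 : 0 ≤ g 0) {t : ℝ} (ht : 0 ≤ t) :
    0 ≤ g t := le_trans g0 (mono (Set.mem_Ici.mpr (le_refl 0)) ht ht)

lemma gen_upper (mono : MonotoneOn g (Set.Ici 0)) {t : ℝ} (ht : 0 ≤ t) :
    (∫ s in (0:ℝ)..t, g s) ≤ t * g t := by
  have h1 : (∫ s in (0:ℝ)..t, g s) ≤ ∫ _ in (0:ℝ)..t, g t := by
    apply intervalIntegral.integral_mono_on ht (gen_intInt mono le_rfl ht)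
      intervalIntegrable_const
    intro x hx
    exact mono hx.1 ht hx.2
  simpa using h1

end generic

section generic2
variable {g : ℝ → ℝ}

lemma gen_lower (mono : MonotoneOn g (Set.Ici 0)) (g0 : 0 ≤ g 0)
    {a b : ℝ} (ha : 0 ≤ a) (hab : a ≤ b) :
    (b - a) * g a ≤ ∫ s in (0:ℝ)..b, g s := by
  have hb : 0 ≤ b := ha.trans hab
  have hsplit : (∫ s in (0:ℝ)..b, g s) = (∫ s in (0:ℝ)..a, g s) + ∫ s in a..b, g s :=
    (intervalIntegral.integral_add_adjacent_intervals
      (gen_intInt mono le_rfl ha) (gen_intInt mono ha hab)).symm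
  have h1 : (0:ℝ) ≤ ∫ s in (0:ℝ)..a, g s := by
    apply intervalIntegral.integral_nonneg ha
    intro x hx; exact gen_nonneg mono g0 hx.1
  have h2 : (b - a) * g a ≤ ∫ s in a..b, g s := by
    have := intervalIntegral.integral_mono_on hab intervalIntegrable_const
      (gen_intInt mono ha hab) (fun x hx => mono ha (ha.trans hx.1) hx.1)
    simpa using this
  linarith

lemma gen_doubling (mono : MonotoneOn g (Set.Ici 0)) (g0 : g 0 = 0) {c : ℝ} (hc : 0 ≤ c)
    (hΔ : ∀ t ≥ (0:ℝ), (∫ s in (0:ℝ)..(2*t), g s) ≤ c * ∫ s in (0:ℝ)..t, g s)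
    {t : ℝ} (ht : 0 ≤ t) : g (2 * t) ≤ c ^ 2 / 2 * g t := by
  rcases eq_or_lt_of_le ht with h | hpos
  · simp [← h, g0]
  · have key : 2 * t * g (2 * t) ≤ c ^ 2 * (t * g t) := by
      have h1 : (2 * (2*t) - 2*t) * g (2*t) ≤ ∫ s in (0:ℝ)..(2*(2*t)), g s :=
        gen_lower mono g0.ge (by linarith) (by linarith)
      have h2 := hΔ (2*t) (by linarith)
      have h3 := hΔ t ht
      have h4 : (∫ s in (0:ℝ)..t, g s) ≤ t * g t := gen_upper mono ht
      nlinarith [mul_le_mul_of_nonneg_left h3 hc, mul_le_mul_of_nonneg_left h4 (sq_nonneg c)]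
    nlinarith

end generic2

section inv
variable {φ' : ℝ → ℝ}

lemma invSet_nonempty (hN : IsNFunctionDeriv φ') (u : ℝ) : {s : ℝ | 0 ≤ s ∧ u < φ' s}.Nonempty := by
  obtain ⟨a, ha⟩ := (hN.tendsto_top.eventually_gt_atTop u).exists_forall_of_atTop
  exact ⟨max a 0, le_max_right a 0, ha _ (le_max_left a 0)⟩

lemma invSet_bdd (u : ℝ) : BddBelow {s : ℝ | 0 ≤ s ∧ u < φ' s} :=
  ⟨0, fun _ hx => hx.1⟩

lemma psi_nonneg (hN : IsNFunctionDeriv φ') (u : ℝ) : 0 ≤ phiInvDeriv φ' u :=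
  le_csInf (invSet_nonempty hN u) (fun _ hx => hx.1)

lemma psi_mono (hN : IsNFunctionDeriv φ') : Monotone (phiInvDeriv φ') := by
  intro u v huv
  apply csInf_le_csInf (invSet_bdd u) (invSet_nonempty hN v)
  intro x hx
  exact ⟨hx.1, lt_of_le_of_lt huv hx.2⟩

lemma psi_le_of_lt {u t : ℝ} (ht : 0 ≤ t) (h : u < φ' t) : phiInvDeriv φ' u ≤ t :=
  csInf_le (invSet_bdd u) ⟨ht, h⟩

lemma lt_phi'_of_psi_lt (hN : IsNFunctionDeriv φ') {u s : ℝ} (h : phiInvDeriv φ' u < s) : u < φ' s := by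
  obtain ⟨x, hx, hxs⟩ := exists_lt_of_csInf_lt (invSet_nonempty hN u) h
  exact lt_of_lt_of_le hx.2 (hN.mono hx.1 (hx.1.trans hxs.le) hxs.le)

lemma psi_zero (hN : IsNFunctionDeriv φ') : phiInvDeriv φ' 0 = 0 := by
  refine le_antisymm ?_ (psi_nonneg hN 0)
  refine le_of_forall_pos_le_add (fun ε hε => ?_)
  simpa using psi_le_of_lt (le_of_lt hε) (hN.pos ε hε)

lemma psi_monoOn (hN : IsNFunctionDeriv φ') : MonotoneOn (phiInvDeriv φ') (Set.Ici 0) :=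
  fun u _ v _ huv => psi_mono hN huv
end inv

section steps
variable {φ' : ℝ → ℝ}

lemma phi'_nonneg (hN : IsNFunctionDeriv φ') {t : ℝ} (ht : 0 ≤ t) : 0 ≤ φ' t :=
  gen_nonneg hN.mono hN.zero.ge ht

lemma cphi_pos (hN : IsNFunctionDeriv φ') {cφ : ℝ}
    (hΔ2 : ∀ t ≥ (0 : ℝ), phiOf φ' (2 * t) ≤ cφ * phiOf φ' t) : 0 < cφ := by
  have h2 : (2 - 1) * φ' 1 ≤ ∫ s in (0:ℝ)..2, φ' s :=
    gen_lower hN.mono hN.zero.ge zero_le_one one_le_two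
  have hp2 : 0 < phiOf φ' 2 := by
    have := hN.pos 1 zero_lt_one
    unfold phiOf; linarith
  have h1 : 0 ≤ phiOf φ' 1 := by
    apply intervalIntegral.integral_nonneg zero_le_one
    intro x hx; exact phi'_nonneg hN hx.1
  have := hΔ2 1 zero_le_one
  norm_num at this
  nlinarith

lemma phi'_doubling (hN : IsNFunctionDeriv φ') {cφ : ℝ} (hcφ : 0 ≤ cφ)
    (hΔ2 : ∀ t ≥ (0 : ℝ), phiOf φ' (2 * t) ≤ cφ * phiOf φ' t) {t : ℝ} (ht : 0 ≤ t) :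
    φ' (2 * t) ≤ cφ ^ 2 / 2 * φ' t :=
  gen_doubling hN.mono hN.zero hcφ (fun u hu => hΔ2 u hu) ht

lemma psi_ge_one (hN : IsNFunctionDeriv φ') : 1 ≤ phiInvDeriv φ' (φ' 1) := by
  apply le_csInf (invSet_nonempty hN _)
  intro x hx
  by_contra h
  push_neg at h
  exact absurd (hN.mono hx.1 (Set.mem_Ici.mpr zero_le_one) h.le) (not_le.mpr hx.2)

lemma cpsi_pos (hN : IsNFunctionDeriv φ') {cψ : ℝ}
    (hΔ2conj : ∀ t ≥ (0 : ℝ), phiConj φ' (2 * t) ≤ cψ * phiConj φ' t) : 0 < cψ := by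
  set u₀ := φ' 1 with hu₀
  have hu₀pos : 0 < u₀ := hN.pos 1 zero_lt_one
  have h2 : (2 * u₀ - u₀) * phiInvDeriv φ' u₀ ≤ ∫ s in (0:ℝ)..(2*u₀), phiInvDeriv φ' s :=
    gen_lower (psi_monoOn hN) (psi_nonneg hN 0) hu₀pos.le (by linarith)
  have hp2 : 0 < phiConj φ' (2 * u₀) := by
    have := psi_ge_one hN
    unfold phiConj; nlinarith
  have h1 : 0 ≤ phiConj φ' u₀ := by
    apply intervalIntegral.integral_nonneg hu₀pos.le
    intro x hx; exact psi_nonneg hN x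
  have := hΔ2conj u₀ hu₀pos.le
  nlinarith

lemma psi_doubling (hN : IsNFunctionDeriv φ') {cψ : ℝ} (hcψ : 0 ≤ cψ)
    (hΔ2conj : ∀ t ≥ (0 : ℝ), phiConj φ' (2 * t) ≤ cψ * phiConj φ' t) {u : ℝ} (hu : 0 ≤ u) :
    phiInvDeriv φ' (2 * u) ≤ cψ ^ 2 / 2 * phiInvDeriv φ' u :=
  gen_doubling (psi_monoOn hN) (psi_zero hN) hcψ (fun v hv => hΔ2conj v hv) hu

/-- The ∇₂-type property of `φ'`. -/
lemma phi'_nabla (hN : IsNFunctionDeriv φ') {c2 : ℝ} (hc2 : 0 ≤ c2)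
    (hdb : ∀ u ≥ (0:ℝ), phiInvDeriv φ' (2 * u) ≤ c2 * phiInvDeriv φ' u)
    {t : ℝ} (ht : 0 ≤ t) :
    2 * φ' t ≤ φ' ((2 * (max c2 1) ^ 2) * t) := by
  rcases eq_or_lt_of_le ht with h | hpos
  · rw [← h]; simp [hN.zero]
  · set u := φ' t with hu
    have hupos : 0 < u := hN.pos t hpos
    have s1 : phiInvDeriv φ' (u/2) ≤ t := psi_le_of_lt ht (by linarith)
    have s2 : phiInvDeriv φ' u ≤ c2 * t := by
      have := hdb (u/2) (by linarith)
      have h2 : 2 * (u/2) = u := by ring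
      rw [h2] at this
      nlinarith [psi_nonneg hN (u/2)]
    have s3 : phiInvDeriv φ' (2*u) ≤ c2^2 * t := by
      have := hdb u hupos.le
      nlinarith [psi_nonneg hN u]
    have hlt : phiInvDeriv φ' (2*u) < (2 * (max c2 1) ^ 2) * t := by
      have h1 : c2 ≤ max c2 1 := le_max_left _ _
      have h2 : (1:ℝ) ≤ max c2 1 := le_max_right _ _
      have hsq0 : c2^2 ≤ (max c2 1)^2 := by nlinarith [mul_le_mul h1 h1 hc2 (hc2.trans h1)]
      have hsq : c2^2 * t ≤ (max c2 1)^2 * t := mul_le_mul_of_nonneg_right hsq0 ht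
      have hpos2 : 0 < (max c2 1)^2 * t := by positivity
      linarith
    exact (lt_phi'_of_psi_lt hN hlt).le

end steps

section power
variable {φ' : ℝ → ℝ}

lemma phi'_iter (hN : IsNFunctionDeriv φ') {a : ℝ} (ha : 1 < a)
    (hnab : ∀ t ≥ (0:ℝ), 2 * φ' t ≤ φ' (a * t)) :
    ∀ n : ℕ, ∀ t ≥ (0:ℝ), 2 ^ n * φ' t ≤ φ' (a ^ n * t) := by
  intro n
  induction n with
  | zero => intro t _; simp
  | succ n ih =>
      intro t ht
      have h1 := ih t ht
      have h2 := hnab (a ^ n * t) (by positivity)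
      calc 2 ^ (n+1) * φ' t = 2 * (2 ^ n * φ' t) := by ring
        _ ≤ 2 * φ' (a ^ n * t) := by linarith
        _ ≤ φ' (a * (a ^ n * t)) := h2
        _ = φ' (a ^ (n+1) * t) := by ring_nf

/-- Iterated ∇₂ gives a power-type lower bound on the growth of `φ'`. -/
lemma phi'_power (hN : IsNFunctionDeriv φ') {a : ℝ} (ha : 1 < a)
    (hnab : ∀ t ≥ (0:ℝ), 2 * φ' t ≤ φ' (a * t)) {δ : ℝ}
    (hδ : 0 < δ) (hδa : δ ≤ Real.log 2 / Real.log a) {s r : ℝ} (hs : 0 < s) (hsr : s ≤ r) :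
    (r / s) ^ δ * φ' s ≤ 2 * φ' r := by
  have hx : (1:ℝ) ≤ r / s := (one_le_div hs).mpr hsr
  have hxpos : (0:ℝ) < r / s := lt_of_lt_of_le one_pos hx
  have hla : 0 < Real.log a := Real.log_pos ha
  have hlx : 0 ≤ Real.log (r / s) := Real.log_nonneg hx
  set x := r / s with hxdef
  set n := ⌊Real.logb a x⌋₊ with hn
  have hlogb_nonneg : 0 ≤ Real.logb a x := by
    unfold Real.logb; positivity
  -- a ^ n ≤ x
  have h1 : (a : ℝ) ^ n ≤ x := by
    have : (a : ℝ) ^ (n : ℝ) ≤ a ^ Real.logb a x :=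
      Real.rpow_le_rpow_of_exponent_le ha.le (Nat.floor_le hlogb_nonneg)
    rwa [Real.rpow_natCast, Real.rpow_logb (by linarith) (by linarith) hxpos] at this
  -- x ^ δ ≤ 2 ^ (n + 1)
  have h2 : x ^ δ ≤ 2 ^ (n + 1) := by
    have hfl : Real.logb a x < n + 1 := Nat.lt_floor_add_one _
    have e1 : x ^ δ = Real.exp (δ * Real.log x) := by
      rw [Real.rpow_def_of_pos hxpos]; ring_nf
    have e2 : ((2:ℝ) ^ (n+1) : ℝ) = Real.exp ((n+1) * Real.log 2) := by
      rw [← Real.exp_log (by positivity : (0:ℝ) < (2:ℝ)^(n+1)), Real.log_pow]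
      push_cast; ring_nf
    rw [e1, e2]
    apply Real.exp_le_exp.mpr
    have hd : δ * Real.log x ≤ Real.log 2 / Real.log a * Real.log x :=
      mul_le_mul_of_nonneg_right hδa hlx
    have hlogb : Real.log 2 / Real.log a * Real.log x = Real.log 2 * Real.logb a x := by
      unfold Real.logb; ring
    have hl2 : (0:ℝ) < Real.log 2 := Real.log_pos one_lt_two
    have : Real.log 2 * Real.logb a x ≤ Real.log 2 * (n + 1) := by
      apply mul_le_mul_of_nonneg_left hfl.le hl2.le
    push_cast
    linarith [hd, hlogb ▸ hd]
  -- combine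
  have h3 := phi'_iter hN ha hnab n s hs.le
  have h4 : φ' (a ^ n * s) ≤ φ' r := by
    apply hN.mono (Set.mem_Ici.mpr (by positivity)) (Set.mem_Ici.mpr (hs.le.trans hsr))
    calc a ^ n * s ≤ x * s := mul_le_mul_of_nonneg_right h1 hs.le
      _ = r := div_mul_cancel₀ r hs.ne'
  have h5 : x ^ δ * φ' s ≤ 2 ^ (n+1) * φ' s :=
    mul_le_mul_of_nonneg_right h2 (phi'_nonneg hN hs.le)
  have h6 : (2:ℝ) ^ (n+1) * φ' s = 2 * (2 ^ n * φ' s) := by ring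
  calc x ^ δ * φ' s ≤ 2 * (2 ^ n * φ' s) := by rw [← h6]; exact h5
    _ ≤ 2 * φ' (a ^ n * s) := by linarith
    _ ≤ 2 * φ' r := by linarith

end power

section shifted
variable {φ' : ℝ → ℝ}

lemma sd_zero (φ' : ℝ → ℝ) (lam : ℝ) : shiftedDeriv φ' lam 0 = 0 := by
  simp [shiftedDeriv]

lemma sd_mono (hN : IsNFunctionDeriv φ') {lam : ℝ} (hlam : 0 ≤ lam) :
    MonotoneOn (shiftedDeriv φ' lam) (Set.Ici 0) := by
  intro s1 hs1 s2 hs2 h12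
  simp only [Set.mem_Ici] at hs1 hs2
  have e : ∀ t : ℝ, shiftedDeriv φ' lam t = φ' (lam + t) * (t / (lam + t)) := by
    intro t; unfold shiftedDeriv; ring
  rw [e, e]
  have hA1 : 0 ≤ φ' (lam + s1) := phi'_nonneg hN (by linarith)
  have hA : φ' (lam + s1) ≤ φ' (lam + s2) :=
    hN.mono (Set.mem_Ici.mpr (by linarith)) (Set.mem_Ici.mpr (by linarith)) (by linarith)
  have hB1 : 0 ≤ s1 / (lam + s1) := div_nonneg hs1 (by linarith)
  have hB : s1 / (lam + s1) ≤ s2 / (lam + s2) := by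
    rcases eq_or_lt_of_le (by linarith : (0:ℝ) ≤ lam + s1) with h | h
    · have hs10 : s1 = 0 := by linarith
      rw [hs10]
      simpa using div_nonneg hs2 (by linarith : (0:ℝ) ≤ lam + s2)
    · rw [div_le_div_iff₀ h (by linarith)]
      nlinarith
  calc φ' (lam + s1) * (s1/(lam+s1)) ≤ φ' (lam + s2) * (s1/(lam+s1)) :=
        mul_le_mul_of_nonneg_right hA hB1
    _ ≤ φ' (lam + s2) * (s2/(lam+s2)) := mul_le_mul_of_nonneg_left hB (hA1.trans hA)

lemma sp_nonneg (hN : IsNFunctionDeriv φ') {lam t : ℝ} (hlam : 0 ≤ lam) (ht : 0 ≤ t) :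
    0 ≤ shiftedPhi φ' lam t := by
  apply intervalIntegral.integral_nonneg ht
  intro x hx
  exact gen_nonneg (sd_mono hN hlam) (sd_zero φ' lam).ge hx.1

lemma sp_upper (hN : IsNFunctionDeriv φ') {lam t : ℝ} (hlam : 0 ≤ lam) (ht : 0 ≤ t) :
    shiftedPhi φ' lam t ≤ t * (φ' (lam + t) / (lam + t) * t) :=
  gen_upper (sd_mono hN hlam) ht

lemma sp_lower (hN : IsNFunctionDeriv φ') {lam t : ℝ} (hlam : 0 ≤ lam) (ht : 0 ≤ t) :
    (t - t/2) * (φ' (lam + t/2) / (lam + t/2) * (t/2)) ≤ shiftedPhi φ' lam t :=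
  gen_lower (sd_mono hN hlam) (sd_zero φ' lam).ge (by linarith) (by linarith)

end shifted

/-- `φ_λ(kt) ≲ k^{1+ε} φ_λ(t)` for `0 ≤ k ≤ 1`, uniformly in the shift `λ`. -/
theorem shifted_phi_power_scaling
    (φ' : ℝ → ℝ) (cφ cψ : ℝ) (hN : IsNFunctionDeriv φ')
    (hΔ2 : ∀ t ≥ (0 : ℝ), phiOf φ' (2 * t) ≤ cφ * phiOf φ' t)
    (hΔ2conj : ∀ t ≥ (0 : ℝ), phiConj φ' (2 * t) ≤ cψ * phiConj φ' t) :
    ∃ ε > (0 : ℝ), ∃ C > (0 : ℝ), ∀ k ∈ Set.Icc (0 : ℝ) 1, ∀ lam ≥ (0 : ℝ), ∀ t ≥ (0 : ℝ),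
      shiftedPhi φ' lam (k * t) ≤ C * k ^ (1 + ε) * shiftedPhi φ' lam t := by
  have hcφ := cphi_pos hN hΔ2
  have hcψ := cpsi_pos hN hΔ2conj
  set c1 : ℝ := max (cφ^2/2) 1 with hc1def
  have hc1pos : (0:ℝ) < c1 := lt_of_lt_of_le one_pos (le_max_right _ _)
  have hc1db : ∀ r ≥ (0:ℝ), φ' (2*r) ≤ c1 * φ' r := fun r hr =>
    le_trans (phi'_doubling hN hcφ.le hΔ2 hr)
      (mul_le_mul_of_nonneg_right (le_max_left _ _) (phi'_nonneg hN hr))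
  set c2 : ℝ := cψ^2/2 with hc2def
  have hc2 : (0:ℝ) ≤ c2 := by positivity
  set a : ℝ := 2 * (max c2 1)^2 with hadef
  have hm1 : (1:ℝ) ≤ max c2 1 := le_max_right _ _
  have ha1 : (1:ℝ) < a := by nlinarith
  have hnab : ∀ t ≥ (0:ℝ), 2 * φ' t ≤ φ' (a * t) := fun u hu =>
    phi'_nabla hN hc2 (fun v hv => psi_doubling hN hcψ.le hΔ2conj hv) hu
  set δ : ℝ := min (Real.log 2 / Real.log a) (1/2) with hδdef
  have hδpos : 0 < δ :=
    lt_min (div_pos (Real.log_pos one_lt_two) (Real.log_pos ha1)) (by norm_num)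
  have hδle : δ ≤ 1 := le_trans (min_le_right _ _) (by norm_num)
  refine ⟨δ, hδpos, 8 * c1, by positivity, ?_⟩
  rintro k ⟨hk0, hk1⟩ lam hlam t ht
  have hknn : (0:ℝ) ≤ k ^ (1 + δ) := Real.rpow_nonneg hk0 _
  rcases eq_or_lt_of_le ht with h | htpos
  · rw [← h]
    simp [shiftedPhi]
  rcases eq_or_lt_of_le hk0 with h | hkpos
  · rw [← h]
    simp [shiftedPhi, Real.zero_rpow (by linarith : (1:ℝ) + δ ≠ 0)]
  -- main case : 0 < k ≤ 1, 0 < t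
  set r : ℝ := lam + t with hrdef
  set q : ℝ := lam + t/2 with hqdef
  set s : ℝ := lam + k*t with hsdef
  have hrpos : 0 < r := by rw [hrdef]; linarith
  have hqpos : 0 < q := by rw [hqdef]; linarith
  have hspos : 0 < s := by rw [hsdef]; nlinarith
  have hsr : s ≤ r := by rw [hsdef, hrdef]; nlinarith
  have hkr : k * r ≤ s := by rw [hsdef, hrdef]; nlinarith
  have hqr : q ≤ r := by rw [hqdef, hrdef]; linarith
  -- Step A : upper bound for LHS
  have hub : shiftedPhi φ' lam (k*t) ≤ k*t * (φ' s / s * (k*t)) :=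
    sp_upper hN hlam (by positivity)
  -- Step B : power bound   φ' s ≤ 2 * (s/r)^δ * φ' r
  have hpw := phi'_power hN ha1 hnab hδpos (min_le_left _ _) hspos hsr
  have hBs : φ' s ≤ 2 * (s/r)^δ * φ' r := by
    have hsrpos : 0 < s / r := div_pos hspos hrpos
    have hrspos : 0 < r / s := div_pos hrpos hspos
    have hinv : (s/r)^δ * (r/s)^δ = 1 := by
      rw [← Real.mul_rpow (le_of_lt hsrpos) (le_of_lt hrspos),
        div_mul_div_comm, show s * r / (r * s) = 1 by rw [mul_comm r s]; field_simp]
      exact Real.one_rpow δ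
    have h0 : (0:ℝ) ≤ (s/r)^δ := Real.rpow_nonneg hsrpos.le _
    calc φ' s = (s/r)^δ * ((r/s)^δ * φ' s) := by rw [← mul_assoc, hinv, one_mul]
      _ ≤ (s/r)^δ * (2 * φ' r) := mul_le_mul_of_nonneg_left hpw h0
      _ = 2 * (s/r)^δ * φ' r := by ring
  -- Step C : lower bound   t^2 * φ' r ≤ 4*c1*r * shiftedPhi lam t
  have hlb : t^2 * φ' r ≤ 4 * c1 * r * shiftedPhi φ' lam t := by
    have h1 : (t - t/2) * (φ' q / q * (t/2)) ≤ shiftedPhi φ' lam t := sp_lower hN hlam ht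
    have h2 : φ' (r/2) ≤ φ' q :=
      hN.mono (Set.mem_Ici.mpr (by positivity)) (Set.mem_Ici.mpr hqpos.le)
        (by rw [hqdef, hrdef]; linarith)
    have h3 : φ' r ≤ c1 * φ' (r/2) := by
      have := hc1db (r/2) (by positivity)
      rwa [show 2 * (r/2) = r by ring] at this
    have h4 : φ' r ≤ c1 * φ' q :=
      h3.trans (mul_le_mul_of_nonneg_left h2 hc1pos.le)
    have h5 : t^2/4 * (φ' q / q) ≤ shiftedPhi φ' lam t := by
      rw [show t^2/4 * (φ' q / q) = (t - t/2) * (φ' q / q * (t/2)) by ring]; exact h1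
    have hφq : 0 ≤ φ' q := phi'_nonneg hN hqpos.le
    have h6 : t^2 * φ' r ≤ c1 * t^2 * φ' q := by
      have := mul_le_mul_of_nonneg_left h4 (sq_nonneg t)
      linarith
    have h7 : c1 * t^2 * φ' q ≤ 4 * c1 * r * (t^2/4 * (φ' q / q)) := by
      rw [show 4 * c1 * r * (t^2/4 * (φ' q / q)) = c1 * t^2 * (φ' q * (r / q)) by ring]
      have hrq : (1:ℝ) ≤ r / q := (one_le_div hqpos).mpr hqr
      have h9 : φ' q ≤ φ' q * (r / q) := le_mul_of_one_le_right hφq hrq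
      have := mul_le_mul_of_nonneg_left h9 (by positivity : (0:ℝ) ≤ c1 * t^2)
      linarith
    have h8 : 4 * c1 * r * (t^2/4 * (φ' q / q)) ≤ 4 * c1 * r * shiftedPhi φ' lam t :=
      mul_le_mul_of_nonneg_left h5 (by positivity)
    exact le_trans h6 (le_trans h7 h8)
  -- Step D : rpow algebra   k*k * ((s/r)^δ * r) ≤ k^(1+δ) * s
  have hD : k * k * ((s/r)^δ * r) ≤ k ^ (1+δ) * s := by
    have hw : 0 < s / r := div_pos hspos hrpos
    have hkw : k ≤ s / r := by rw [le_div_iff₀ hrpos]; exact hkr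
    have h1 : k ^ ((1:ℝ)-δ) ≤ (s/r) ^ ((1:ℝ)-δ) :=
      Real.rpow_le_rpow hk0 hkw (by linarith)
    have ek : k * k = k ^ (1+δ) * k ^ ((1:ℝ)-δ) := by
      rw [← Real.rpow_add hkpos, show (1+δ) + ((1:ℝ)-δ) = 2 by ring,
        show (2:ℝ) = ((2:ℕ):ℝ) by norm_num, Real.rpow_natCast]
      ring
    have ew : (s/r) ^ δ * (s/r) ^ ((1:ℝ)-δ) = s / r := by
      rw [← Real.rpow_add hw, show δ + ((1:ℝ)-δ) = 1 by ring, Real.rpow_one]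
    calc k * k * ((s/r)^δ * r)
        = (k ^ (1+δ) * ((s/r)^δ * r)) * k ^ ((1:ℝ)-δ) := by rw [ek]; ring
      _ ≤ (k ^ (1+δ) * ((s/r)^δ * r)) * (s/r) ^ ((1:ℝ)-δ) := by
          apply mul_le_mul_of_nonneg_left h1
          positivity
      _ = k ^ (1+δ) * (((s/r)^δ * (s/r) ^ ((1:ℝ)-δ)) * r) := by ring
      _ = k ^ (1+δ) * s := by rw [ew]; field_simp
  -- combine
  have hφs : 0 ≤ φ' s := phi'_nonneg hN hspos.le
  have hφr : 0 ≤ φ' r := phi'_nonneg hN hrpos.le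
  have hsrd : (0:ℝ) ≤ (s/r)^δ := Real.rpow_nonneg (div_pos hspos hrpos).le _
  have cA : shiftedPhi φ' lam (k*t) ≤ k * k * t^2 * (φ' s / s) := by
    rw [show k * k * t^2 * (φ' s / s) = k*t * (φ' s / s * (k*t)) by ring]; exact hub
  have cB : k * k * t^2 * (φ' s / s) ≤ k * k * t^2 * ((2 * (s/r)^δ * φ' r) / s) := by
    apply mul_le_mul_of_nonneg_left _ (by positivity : (0:ℝ) ≤ k * k * t^2)
    exact (div_le_div_iff_of_pos_right hspos).mpr hBs
  have hE : k * k * (s/r)^δ / s ≤ k ^ (1+δ) / r := by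
    rw [div_le_div_iff₀ hspos hrpos]
    calc k * k * (s/r)^δ * r = k * k * ((s/r)^δ * r) := by ring
      _ ≤ k ^ (1+δ) * s := hD
  have cC : k * k * t^2 * ((2 * (s/r)^δ * φ' r) / s)
      ≤ 2 * (t^2 * φ' r) * (k ^ (1+δ) / r) := by
    rw [show k * k * t^2 * ((2 * (s/r)^δ * φ' r) / s)
        = 2 * (t^2 * φ' r) * (k * k * (s/r)^δ / s) by ring]
    exact mul_le_mul_of_nonneg_left hE (by positivity)
  have cD : 2 * (t^2 * φ' r) * (k ^ (1+δ) / r) ≤ 2 * (4 * c1 * shiftedPhi φ' lam t) * k ^ (1+δ) := by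
    rw [show 2 * (t^2 * φ' r) * (k ^ (1+δ) / r) = 2 * k ^ (1+δ) * ((t^2 * φ' r) / r) by ring,
      show 2 * (4 * c1 * shiftedPhi φ' lam t) * k ^ (1+δ)
        = 2 * k ^ (1+δ) * (4 * c1 * shiftedPhi φ' lam t) by ring]
    apply mul_le_mul_of_nonneg_left _ (by positivity)
    rw [div_le_iff₀ hrpos]
    linarith
  calc shiftedPhi φ' lam (k*t) ≤ k * k * t^2 * (φ' s / s) := cA
    _ ≤ k * k * t^2 * ((2 * (s/r)^δ * φ' r) / s) := cB
    _ ≤ 2 * (t^2 * φ' r) * (k ^ (1+δ) / r) := cC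
    _ ≤ 2 * (4 * c1 * shiftedPhi φ' lam t) * k ^ (1+δ) := cD
    _ = 8 * c1 * k ^ (1+δ) * shiftedPhi φ' lam t := by ring
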